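/- Let R be a left Noetherian ring. Then R satisfies property (◇) (every finitely generated left R-module containing an essential simple submodule is Artinian) if and only if every left R-module whose socle is an essential submodule is semi-Artinian. -/

import Mathlib

universe u v w

/-- The socle of a module: the sum (supremum) of all simple submodules. -/
def moduleSocle (R : Type u) [Ring R] (M : Type v) [AddCommGroup M] [Module R M] :
    Submodule R M :=
  sSup {S : Submodule R M | IsSimpleModule R S}

/-- A submodule `N` of `M` is essential if `N ⊓ L ≠ ⊥` for every nonzero submodule `L` of `M`. -/
def IsEssentialSubmodule {R : Type u} [Ring R] {M : Type v} [AddCommGroup M] [Module R M]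
    (N : Submodule R M) : Prop :=
  ∀ L : Submodule R M, L ≠ ⊥ → N ⊓ L ≠ ⊥

/-- A module is semi-Artinian if every nonzero quotient has a nonzero socle. -/
def IsSemiartinianModule (R : Type u) [Ring R] (M : Type v) [AddCommGroup M] [Module R M] :
    Prop :=
  ∀ N : Submodule R M, N ≠ ⊤ → moduleSocle R (M ⧸ N) ≠ ⊥

/-- A module is singular if the annihilator of each of its elements is an essential left
ideal of `R`. -/
def IsSingularModule (R : Type u) [Ring R] (M : Type v) [AddCommGroup M] [Module R M] : Prop :=
  ∀ m : M, IsEssentialSubmodule (LinearMap.ker (LinearMap.toSpanSingleton R M m))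

/-- Property (◇): every finitely generated left `R`-module containing an essential simple
submodule is Artinian. -/
def HasPropertyDiamond (R : Type u) [Ring R] : Prop :=
  ∀ (M : Type v) [AddCommGroup M] [Module R M], Module.Finite R M →
    (∃ S : Submodule R M, IsSimpleModule R S ∧ IsEssentialSubmodule S) → IsArtinian R M

/-- A left C-ring: every nonzero cyclic singular left module has a nonzero socle. -/
def IsLeftCRing (R : Type u) [Ring R] : Prop :=
  ∀ (M : Type v) [AddCommGroup M] [Module R M], Nontrivial M →
    (∃ m : M, Submodule.span R {m} = ⊤) → IsSingularModule R M →
    moduleSocle R M ≠ ⊥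

/-- The Dickson torsion part of a module: the sum of all its semi-Artinian submodules. -/
def dicksonTorsionPart (R : Type u) [Ring R] (A : Type v) [AddCommGroup A] [Module R A] :
    Submodule R A :=
  sSup {N : Submodule R A | IsSemiartinianModule R N}

section Aux

variable {R : Type u} [Ring R]

theorem aux_simple_ne_bot {M : Type v} [AddCommGroup M] [Module R M]
    {S : Submodule R M} (h : IsSimpleModule R S) : S ≠ ⊥ :=
  (isSimpleModule_iff_isAtom.mp h).1

theorem aux_socle_ne_bot {M : Type v} [AddCommGroup M] [Module R M] :
    moduleSocle R M ≠ ⊥ ↔ ∃ S : Submodule R M, IsSimpleModule R S := by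
  constructor
  · intro h
    by_contra hc
    push_neg at hc
    exact h (by rw [moduleSocle, sSup_eq_bot]; exact fun S hS => absurd hS (hc S))
  · rintro ⟨S, hS⟩ h
    exact aux_simple_ne_bot hS (le_bot_iff.mp (h ▸ le_sSup (show S ∈ _ from hS)))

theorem aux_map_simple {M : Type v} {N : Type w} [AddCommGroup M] [Module R M]
    [AddCommGroup N] [Module R N] (f : M →ₗ[R] N) (hf : Function.Injective f)
    {S : Submodule R M} (hS : IsSimpleModule R S) : IsSimpleModule R (S.map f) := by
  haveI := hS
  exact IsSimpleModule.congr (Submodule.equivMapOfInjective f hf S).symm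

theorem aux_exists_simple_le_of_le_socle {M : Type v} [AddCommGroup M] [Module R M]
    {L : Submodule R M} (hL : L ≤ moduleSocle R M) (hne : L ≠ ⊥) :
    ∃ S : Submodule R M, S ≤ L ∧ IsSimpleModule R S := by
  set T := moduleSocle R M with hTdef
  have hinj : Function.Injective T.subtype := Submodule.injective_subtype T
  have hT : sSup {m : Submodule R ↥T | IsSimpleModule R m} = ⊤ := by
    apply Submodule.map_injective_of_injective hinj
    rw [Submodule.map_top, Submodule.range_subtype]
    apply le_antisymm
    · exact Submodule.map_subtype_le T _
    · conv_lhs => rw [hTdef, moduleSocle]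
      apply sSup_le
      intro S hS
      have hST : S ≤ T := le_sSup hS
      have hmc : Submodule.map T.subtype (Submodule.comap T.subtype S) = S := by
        rw [Submodule.map_comap_subtype]; exact inf_eq_right.mpr hST
      rw [← hmc]
      apply Submodule.map_mono
      apply le_sSup
      show IsSimpleModule R (Submodule.comap T.subtype S)
      haveI : IsSimpleModule R S := hS
      exact IsSimpleModule.congr (Submodule.comapSubtypeEquivOfLe hST)
  haveI : IsSemisimpleModule R ↥T := IsSemisimpleModule.of_sSup_simples_eq_top hT
  set L' := Submodule.comap T.subtype L with hL'def
  have hmapL' : Submodule.map T.subtype L' = L := by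
    rw [hL'def, Submodule.map_comap_subtype]; exact inf_eq_right.mpr hL
  have hL'ne : L' ≠ ⊥ := fun h => hne (by rw [← hmapL', h, Submodule.map_bot])
  obtain ⟨m, hmle, hm⟩ := (IsSemisimpleModule.eq_bot_or_exists_simple_le L').resolve_left hL'ne
  exact ⟨m.map T.subtype, hmapL' ▸ Submodule.map_mono hmle, aux_map_simple _ hinj hm⟩

theorem aux_exists_maximal {C : Type v} [AddCommGroup C] [Module R C] [IsNoetherian R C]
    (P : Set (Submodule R C)) (hne : P.Nonempty) : ∃ W ∈ P, ∀ A ∈ P, ¬ W < A := by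
  have wf : WellFounded (· > · : Submodule R C → Submodule R C → Prop) :=
    (inferInstance : WellFoundedGT (Submodule R C)).wf
  obtain ⟨W, hW, hmin⟩ := wf.has_min P hne
  exact ⟨W, hW, fun A hA h => hmin A hA h⟩

theorem aux_artinian_quot_inf {C : Type v} [AddCommGroup C] [Module R C]
    {K₁ K₂ : Submodule R C} (h₁ : IsArtinian R (C ⧸ K₁)) (h₂ : IsArtinian R (C ⧸ K₂)) :
    IsArtinian R (C ⧸ (K₁ ⊓ K₂)) := by
  haveI := h₁; haveI := h₂
  set f : C →ₗ[R] (C ⧸ K₁) × (C ⧸ K₂) := (K₁.mkQ).prod (K₂.mkQ) with hf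
  have hker : LinearMap.ker f = K₁ ⊓ K₂ := by
    rw [hf, LinearMap.ker_prod, Submodule.ker_mkQ, Submodule.ker_mkQ]
  exact isArtinian_of_injective ((K₁ ⊓ K₂).liftQ f hker.ge)
    (LinearMap.ker_eq_bot.mp (Submodule.ker_liftQ_eq_bot _ _ _ hker.le))

theorem aux_quot_essential_simple {C : Type v} [AddCommGroup C] [Module R C]
    {S K : Submodule R C} (hS : IsSimpleModule R S) (hdisj : K ⊓ S = ⊥)
    (hmax : ∀ A : Submodule R C, K < A → A ⊓ S ≠ ⊥) :
    ∃ T : Submodule R (C ⧸ K), IsSimpleModule R T ∧ IsEssentialSubmodule T := by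
  refine ⟨S.map K.mkQ, ?_, ?_⟩
  · haveI := hS
    have hinj : Function.Injective ((K.mkQ).comp S.subtype) := by
      rw [← LinearMap.ker_eq_bot, LinearMap.ker_comp, Submodule.ker_mkQ, eq_bot_iff]
      rintro ⟨s, hs⟩ h
      have : s ∈ K ⊓ S := ⟨h, hs⟩
      rw [hdisj] at this
      exact Subtype.ext (by simpa using this)
    have hrange : S.map K.mkQ = LinearMap.range ((K.mkQ).comp S.subtype) := by
      rw [LinearMap.range_comp, Submodule.range_subtype]
    rw [hrange]
    exact IsSimpleModule.congr (LinearEquiv.ofInjective _ hinj).symm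
  · intro L hL
    set L' := Submodule.comap K.mkQ L with hL'def
    have hmapL' : Submodule.map K.mkQ L' = L :=
      Submodule.map_comap_eq_of_surjective (Submodule.mkQ_surjective K) L
    have hKle : K ≤ L' := by
      intro k hk
      show K.mkQ k ∈ L
      have : K.mkQ k = 0 := by simpa [Submodule.mkQ_apply, Submodule.Quotient.mk_eq_zero] using hk
      rw [this]; exact L.zero_mem
    have hKne : K ≠ L' := by
      intro h
      apply hL
      rw [← hmapL', ← h, eq_bot_iff]
      rintro y ⟨k, hk, rfl⟩
      simpa [Submodule.mkQ_apply, Submodule.Quotient.mk_eq_zero] using hk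
    obtain ⟨x, hx, hx0⟩ := (Submodule.ne_bot_iff _).mp (hmax L' (lt_of_le_of_ne hKle hKne))
    have hxS : x ∈ S := (Submodule.mem_inf.mp hx).2
    have hxL' : x ∈ L' := (Submodule.mem_inf.mp hx).1
    have hxK : x ∉ K := fun h => hx0 (by
      have : x ∈ K ⊓ S := ⟨h, hxS⟩
      rwa [hdisj, Submodule.mem_bot] at this)
    apply (Submodule.ne_bot_iff _).mpr
    refine ⟨K.mkQ x, Submodule.mem_inf.mpr ⟨Submodule.mem_map_of_mem hxS, hxL'⟩, ?_⟩
    simpa [Submodule.mkQ_apply, Submodule.Quotient.mk_eq_zero] using hxK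

theorem aux_simple_isArtinian {M : Type v} [AddCommGroup M] [Module R M]
    (h : IsSimpleModule R M) : IsArtinian R M := by
  haveI := h
  haveI : Finite (Submodule R M) := by
    apply Finite.of_surjective (fun b : Bool => if b then ⊤ else (⊥ : Submodule R M))
    intro N
    rcases eq_bot_or_eq_top N with h | h
    · exact ⟨false, by simp [h]⟩
    · exact ⟨true, by simp [h]⟩
  exact Finite.to_wellFoundedLT

theorem aux_key [IsNoetherianRing R] (hD : HasPropertyDiamond.{u, v} R)
    (C : Type v) [AddCommGroup C] [Module R C] [Module.Finite R C]
    (hsoc : ∀ L : Submodule R C, L ≠ ⊥ → ∃ S : Submodule R C, S ≤ L ∧ IsSimpleModule R S) :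
    IsArtinian R C := by
  have htop : IsArtinian R (C ⧸ (⊤ : Submodule R C)) := by
    haveI : Subsingleton (C ⧸ (⊤ : Submodule R C)) :=
      Submodule.Quotient.subsingleton_iff.mpr rfl
    infer_instance
  obtain ⟨W, ⟨K, hKart, hKW⟩, hWmax⟩ :=
    aux_exists_maximal {W : Submodule R C | ∃ K : Submodule R C, IsArtinian R (C ⧸ K) ∧ K ⊓ W = ⊥}
      ⟨⊥, ⊤, htop, inf_bot_eq ⊤⟩
  by_cases hK : K = ⊥
  · rw [hK] at hKart
    exact isArtinian_of_linearEquiv (Submodule.quotEquivOfEqBot ⊥ rfl)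
  · exfalso
    obtain ⟨S, hSK, hS⟩ := hsoc K hK
    have hWS : W ⊓ S = ⊥ := by
      rw [eq_bot_iff, ← hKW]
      exact le_inf (inf_le_right.trans hSK) inf_le_left
    obtain ⟨Ks, ⟨hWKs, hKsS⟩, hKsmax⟩ :=
      aux_exists_maximal {A : Submodule R C | W ≤ A ∧ A ⊓ S = ⊥} ⟨W, le_rfl, hWS⟩
    have hKsmax' : ∀ A, Ks < A → A ⊓ S ≠ ⊥ := fun A hA h =>
      hKsmax A ⟨hWKs.trans hA.le, h⟩ hA
    obtain ⟨T, hT, hTess⟩ := aux_quot_essential_simple hS hKsS hKsmax'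
    haveI : Module.Finite R (C ⧸ Ks) :=
      Module.Finite.of_surjective Ks.mkQ (Submodule.mkQ_surjective Ks)
    have hart2 : IsArtinian R (C ⧸ Ks) := hD (C ⧸ Ks) inferInstance ⟨T, hT, hTess⟩
    have hsub : W < W ⊔ S := by
      rw [left_lt_sup]
      intro hle
      exact aux_simple_ne_bot hS (by rw [← inf_eq_right.mpr hle]; exact hWS)
    apply hWmax (W ⊔ S) ?_ hsub
    refine ⟨K ⊓ Ks, aux_artinian_quot_inf hKart hart2, ?_⟩
    rw [eq_bot_iff]
    rintro z hz
    obtain ⟨hz1, hzWS⟩ := Submodule.mem_inf.mp hz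
    obtain ⟨hzK, hzKs⟩ := Submodule.mem_inf.mp hz1
    obtain ⟨w, hw, s, hs, rfl⟩ := Submodule.mem_sup.mp hzWS
    have hsKs : s ∈ Ks := by
      have : (w + s) - w ∈ Ks := Submodule.sub_mem _ hzKs (hWKs hw)
      simpa using this
    have hs0 : s = 0 := by
      have : s ∈ Ks ⊓ S := ⟨hsKs, hs⟩
      rwa [hKsS, Submodule.mem_bot] at this
    have hw0 : w = 0 := by
      have : w ∈ K ⊓ W := ⟨by simpa [hs0] using hzK, hw⟩
      rwa [hKW, Submodule.mem_bot] at this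
    simp [hs0, hw0]

end Aux

/-- For a left Noetherian ring, property (◇) holds iff every module with essential socle
is semi-Artinian. -/
theorem stmt2 (R : Type u) [Ring R] [IsNoetherianRing R] :
    HasPropertyDiamond.{u, v} R ↔
      ∀ (M : Type v) [AddCommGroup M] [Module R M],
        IsEssentialSubmodule (moduleSocle R M) → IsSemiartinianModule R M := by
  constructor
  · intro hD M _ _ hess N hN
    have hNlt : N < ⊤ := lt_top_iff_ne_top.mpr hN
    obtain ⟨x, -, hxN⟩ := SetLike.exists_of_lt hNlt
    set C := Submodule.span R {x} with hC
    haveI : Module.Finite R ↥C := Module.Finite.iff_fg.mpr (Submodule.fg_span_singleton x)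
    have hsoc : ∀ L : Submodule R ↥C, L ≠ ⊥ →
        ∃ S : Submodule R ↥C, S ≤ L ∧ IsSimpleModule R S := by
      intro L hL
      set L' := Submodule.map C.subtype L with hL'
      have hL'ne : L' ≠ ⊥ := by
        intro h
        apply hL
        apply Submodule.map_injective_of_injective (Submodule.injective_subtype C)
        rw [← hL', h, Submodule.map_bot]
      have h1 : moduleSocle R M ⊓ L' ≠ ⊥ := hess L' hL'ne
      obtain ⟨S, hSle, hSsimple⟩ := aux_exists_simple_le_of_le_socle
        (inf_le_left : moduleSocle R M ⊓ L' ≤ _) h1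
      have hSL' : S ≤ L' := hSle.trans inf_le_right
      have hSC : S ≤ C := hSL'.trans (Submodule.map_subtype_le C L)
      have hcomapL' : Submodule.comap C.subtype L' = L := by
        rw [hL', Submodule.comap_map_eq, Submodule.ker_subtype, sup_bot_eq]
      refine ⟨Submodule.comap C.subtype S, ?_, ?_⟩
      · rw [← hcomapL']
        exact Submodule.comap_mono hSL'
      · haveI := hSsimple
        exact IsSimpleModule.congr (Submodule.comapSubtypeEquivOfLe hSC)
    haveI hart : IsArtinian R ↥C := aux_key hD ↥C hsoc
    set N' := Submodule.comap C.subtype N with hN'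
    have hN'top : N' ≠ ⊤ := by
      intro h
      have hx : x ∈ C := Submodule.mem_span_singleton_self x
      have : (⟨x, hx⟩ : ↥C) ∈ N' := h ▸ Submodule.mem_top
      exact hxN this
    haveI : Nontrivial (↥C ⧸ N') :=
      Submodule.Quotient.nontrivial_iff.mpr (lt_top_iff_ne_top.mpr hN'top).ne
    haveI hartq : IsArtinian R (↥C ⧸ N') := inferInstance
    haveI : IsAtomic (Submodule R (↥C ⧸ N')) :=
      isAtomic_of_orderBot_wellFounded_lt
        (IsWellFounded.wf : WellFounded (· < · : Submodule R (↥C ⧸ N') → _ → Prop))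
    have htb : (⊤ : Submodule R (↥C ⧸ N')) ≠ ⊥ := by
      intro h
      obtain ⟨a, b, hab⟩ := exists_pair_ne (↥C ⧸ N')
      apply hab
      have ha : a ∈ (⊥ : Submodule R (↥C ⧸ N')) := h ▸ Submodule.mem_top
      have hb : b ∈ (⊥ : Submodule R (↥C ⧸ N')) := h ▸ Submodule.mem_top
      rw [Submodule.mem_bot] at ha hb
      rw [ha, hb]
    obtain ⟨a, ha, -⟩ :=
      (IsAtomic.eq_bot_or_exists_atom_le (⊤ : Submodule R (↥C ⧸ N'))).resolve_left htb
    have hasimple : IsSimpleModule R a := isSimpleModule_iff_isAtom.mpr ha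
    have hker : LinearMap.ker ((N.mkQ).comp C.subtype) = N' := by
      rw [LinearMap.ker_comp, Submodule.ker_mkQ, hN']
    have hginj : Function.Injective (N'.liftQ ((N.mkQ).comp C.subtype) hker.ge) :=
      LinearMap.ker_eq_bot.mp (Submodule.ker_liftQ_eq_bot _ _ _ hker.le)
    rw [aux_socle_ne_bot]
    exact ⟨a.map _, aux_map_simple _ hginj hasimple⟩
  · intro h M _ _ hfin ⟨S, hS, hSess⟩
    have hsocess : IsEssentialSubmodule (moduleSocle R M) := by
      intro L hL hbot
      apply hSess L hL
      rw [eq_bot_iff] at hbot ⊢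
      exact le_trans (inf_le_inf_right L (le_sSup (show S ∈ _ from hS))) hbot
    have hsemi := h M hsocess
    haveI : Module.Finite R M := hfin
    haveI : IsNoetherian R M := inferInstance
    have hbotart : IsArtinian R ↥(⊥ : Submodule R M) := by
      haveI : Subsingleton ↥(⊥ : Submodule R M) := by
        constructor
        rintro ⟨a, ha⟩ ⟨b, hb⟩
        rw [Submodule.mem_bot] at ha hb
        exact Subtype.ext (ha.trans hb.symm)
      infer_instance
    obtain ⟨Nm, hNart, hNmax⟩ :=
      aux_exists_maximal {N : Submodule R M | IsArtinian R ↥N} ⟨⊥, hbotart⟩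
    by_cases hNm : Nm = ⊤
    · rw [hNm] at hNart
      haveI : IsArtinian R ↥(⊤ : Submodule R M) := hNart
      exact isArtinian_of_linearEquiv (Submodule.topEquiv : ↥(⊤ : Submodule R M) ≃ₗ[R] M)
    · exfalso
      obtain ⟨T, hT⟩ := aux_socle_ne_bot.mp (hsemi Nm hNm)
      set P := Submodule.comap Nm.mkQ T with hP
      have hNmP : Nm ≤ P := by
        intro n hn
        show Nm.mkQ n ∈ T
        have : Nm.mkQ n = 0 := by
          simpa [Submodule.mkQ_apply, Submodule.Quotient.mk_eq_zero] using hn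
        rw [this]; exact T.zero_mem
      have hmapP : Submodule.map Nm.mkQ P = T :=
        Submodule.map_comap_eq_of_surjective (Submodule.mkQ_surjective Nm) T
      have hne : Nm ≠ P := by
        intro hEq
        apply aux_simple_ne_bot hT
        rw [← hmapP, ← hEq, eq_bot_iff]
        rintro y ⟨k, hk, rfl⟩
        simpa [Submodule.mkQ_apply, Submodule.Quotient.mk_eq_zero] using hk
      -- P is Artinian
      haveI : IsArtinian R ↥Nm := hNart
      have hPart : IsArtinian R ↥P := by
        set g : ↥P →ₗ[R] M ⧸ Nm := (Nm.mkQ).comp P.subtype with hg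
        have hkerg : LinearMap.ker g = Submodule.comap P.subtype Nm := by
          rw [hg, LinearMap.ker_comp, Submodule.ker_mkQ]
        have hrangeg : LinearMap.range g = T := by
          rw [hg, LinearMap.range_comp, Submodule.range_subtype, hmapP]
        haveI hsubart : IsArtinian R ↥(Submodule.comap P.subtype Nm) :=
          isArtinian_of_linearEquiv (Submodule.comapSubtypeEquivOfLe hNmP).symm
        haveI hTart : IsArtinian R ↥T := aux_simple_isArtinian hT
        haveI hrart : IsArtinian R ↥(LinearMap.range g) := by
          rw [hrangeg]; exact hTart
        have hquot : IsArtinian R (↥P ⧸ Submodule.comap P.subtype Nm) := by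
          have e1 : (↥P ⧸ Submodule.comap P.subtype Nm) ≃ₗ[R] (↥P ⧸ LinearMap.ker g) :=
            Submodule.quotEquivOfEq _ _ hkerg.symm
          have e2 : (↥P ⧸ LinearMap.ker g) ≃ₗ[R] ↥(LinearMap.range g) :=
            g.quotKerEquivRange
          exact isArtinian_of_linearEquiv (e1.trans e2).symm
        exact (isArtinian_iff_submodule_quotient (Submodule.comap P.subtype Nm)).mpr
          ⟨hsubart, hquot⟩
      exact hNmax P hPart (lt_of_le_of_ne hNmP hne)
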